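/- Let A be an object of 𝒞 and suppose there exist an object C′ in 𝒞 and a non-zero morphism C′ → ΣA. Let A → Y → Z → ΣA be an Auslander-Reiten triangle in 𝒯. Then the following are equivalent: (1) Z has a 𝒞-envelope ε : Z → C; (2) there exists an Auslander-Reiten triangle A → B → C → ΣA in 𝒞 (with first term the object A). -/

import Mathlib

open CategoryTheory CategoryTheory.Limits CategoryTheory.Pretriangulated

set_option linter.unusedSectionVars false
set_option maxHeartbeats 1000000

universe v u

variable {k : Type} [Field k]
variable {T : Type u} [Category.{v} T] [Preadditive T] [Linear k T]
  [HasZeroObject T] [HasShift T ℤ] [∀ n : ℤ, (shiftFunctor T n).Additive]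
  [Pretriangulated T]

/-- `ε : Z ⟶ C` is an `S`-preenvelope of `Z`: `C` lies in `S` and every morphism from `Z`
to an object of `S` factors through `ε`. -/
def IsPreenvelope (S : Set T) {Z C : T} (ε : Z ⟶ C) : Prop :=
  C ∈ S ∧ ∀ C' : T, C' ∈ S → ∀ f : Z ⟶ C', ∃ g : C ⟶ C', ε ≫ g = f

/-- `ε : Z ⟶ C` is an `S`-envelope: a left-minimal `S`-preenvelope. -/
def IsEnvelope (S : Set T) {Z C : T} (ε : Z ⟶ C) : Prop :=
  IsPreenvelope S ε ∧ ∀ g : C ⟶ C, ε ≫ g = ε → IsIso g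

/-- `X ⟶ Y ⟶ Z --d--> ΣX` is an Auslander-Reiten triangle in `T`. -/
def IsARTriangle {X Y Z : T} (f : X ⟶ Y) (g : Y ⟶ Z) (d : Z ⟶ X⟦(1 : ℤ)⟧) : Prop :=
  (Triangle.mk f g d ∈ distTriang T) ∧ d ≠ 0 ∧
    (∀ (X' : T) (u : X ⟶ X'), ¬(∃ v : X' ⟶ X, u ≫ v = 𝟙 X) → ∃ w : Y ⟶ X', f ≫ w = u) ∧
    (∀ (Z' : T) (u : Z' ⟶ Z), ¬(∃ v : Z ⟶ Z', v ≫ u = 𝟙 Z) → ∃ w : Z' ⟶ Y, w ≫ g = u)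

/-- `A ⟶ B ⟶ C --h--> ΣA` is an Auslander-Reiten triangle in the subcategory
determined by `S`. -/
def IsARTriangleIn (S : Set T) {A B C : T} (f : A ⟶ B) (g : B ⟶ C)
    (h : C ⟶ A⟦(1 : ℤ)⟧) : Prop :=
  A ∈ S ∧ B ∈ S ∧ C ∈ S ∧ (Triangle.mk f g h ∈ distTriang T) ∧ h ≠ 0 ∧
    (∀ A' : T, A' ∈ S → ∀ u : A ⟶ A',
      ¬(∃ v : A' ⟶ A, u ≫ v = 𝟙 A) → ∃ w : B ⟶ A', f ≫ w = u) ∧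
    (∀ C' : T, C' ∈ S → ∀ u : C' ⟶ C,
      ¬(∃ v : C ⟶ C', v ≫ u = 𝟙 C) → ∃ w : C' ⟶ B, w ≫ g = u)

section LinearAlgebra

open Module

/-- Any nonzero vector admits a functional sending it to `1`. -/
lemma exists_functional {M : Type v} [AddCommGroup M] [Module k M] (x : M) (hx : x ≠ 0) :
    ∃ ℓ : M →ₗ[k] k, ℓ x = 1 := by
  have h : ¬ ∀ φ : Module.Dual k M, φ x = 0 := by
    rw [Module.forall_dual_apply_eq_zero_iff k x]; exact hx
  push_neg at h
  obtain ⟨φ, hφ⟩ := h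
  exact ⟨(φ x)⁻¹ • φ, by simp [inv_mul_cancel₀ hφ]⟩

/-- If a bilinear pairing `B : U × W → k` is left non-degenerate, and its pullback along
`m : V → U` is right non-degenerate, then `m` is surjective. -/
lemma pairing_surjective {U W V : Type v} [AddCommGroup U] [Module k U]
    [AddCommGroup W] [Module k W] [AddCommGroup V] [Module k V]
    [FiniteDimensional k W]
    (B : U →ₗ[k] W →ₗ[k] k) (m : V →ₗ[k] U)
    (h₁ : ∀ u : U, u ≠ 0 → ∃ w, B u w ≠ 0)
    (h₂ : ∀ w : W, w ≠ 0 → ∃ v, B (m v) w ≠ 0) :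
    Function.Surjective m := by
  have hrange : LinearMap.range (B ∘ₗ m) = ⊤ := by
    by_contra hne
    obtain ⟨φ, hφ0, hφ⟩ := Submodule.exists_dual_map_eq_bot_of_lt_top
      (p := LinearMap.range (B ∘ₗ m)) (lt_top_iff_ne_top.2 hne) inferInstance
    set w₀ := (Module.evalEquiv k W).symm φ with hw₀def
    have hw₀ : w₀ ≠ 0 := by
      simp only [hw₀def, ne_eq, LinearEquiv.map_eq_zero_iff]; exact hφ0
    obtain ⟨v, hv⟩ := h₂ w₀ hw₀
    apply hv
    have hmem : B (m v) ∈ LinearMap.range (B ∘ₗ m) := ⟨v, rfl⟩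
    have h0 : φ (B (m v)) = 0 := by
      have := hφ ▸ Submodule.mem_map_of_mem (f := φ) hmem
      simpa using this
    have hev : (Module.evalEquiv k W) w₀ = φ := by simp [hw₀def]
    calc B (m v) w₀ = (Module.evalEquiv k W) w₀ (B (m v)) := by
          rw [Module.evalEquiv_apply]; rfl
    _ = 0 := by rw [hev, h0]
  intro u
  have hmem : B u ∈ LinearMap.range (B ∘ₗ m) := hrange ▸ Submodule.mem_top
  obtain ⟨v, hv⟩ := hmem
  refine ⟨v, ?_⟩
  by_contra hne
  obtain ⟨w, hw⟩ := h₁ (m v - u) (sub_ne_zero.2 hne)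
  apply hw
  have hBv : B (m v) = B u := hv
  simp [map_sub, hBv]

end LinearAlgebra
/-- If the first map of a distinguished triangle is a section then the connecting map is zero. -/
lemma mor₃_eq_zero_of_section {X Y Z : T} {f : X ⟶ Y} {g : Y ⟶ Z} {h : Z ⟶ X⟦(1:ℤ)⟧}
    (hT : Triangle.mk f g h ∈ distTriang T) {r : Y ⟶ X} (hr : f ≫ r = 𝟙 X) : h = 0 := by
  have h31 : h ≫ (shiftFunctor T (1:ℤ)).map f = 0 := comp_distTriang_mor_zero₃₁ _ hT
  calc h = h ≫ (shiftFunctor T (1:ℤ)).map (𝟙 X) := by simp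
  _ = (h ≫ (shiftFunctor T (1:ℤ)).map f) ≫ (shiftFunctor T (1:ℤ)).map r := by
      rw [← hr, Functor.map_comp, Category.assoc]
  _ = 0 := by rw [h31, zero_comp]


/-- L1 : `d` factors through every nonzero map into `A⟦1⟧`. -/
lemma L1 {A Y Z : T} {f : A ⟶ Y} {g : Y ⟶ Z} {d : Z ⟶ A⟦(1:ℤ)⟧} (hAR : IsARTriangle f g d)
    {V : T} (γ : V ⟶ A⟦(1:ℤ)⟧) (hγ : γ ≠ 0) : ∃ t : Z ⟶ V, t ≫ γ = d := by
  obtain ⟨B₁, u₁, v₁, hT⟩ := distinguished_cocone_triangle₂ γ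
  have hu₁ : ¬(∃ r : B₁ ⟶ A, u₁ ≫ r = 𝟙 A) := by
    rintro ⟨r, hr⟩; exact hγ (mor₃_eq_zero_of_section hT hr)
  obtain ⟨t₁, ht₁⟩ := hAR.2.2.1 B₁ u₁ hu₁
  have h31 : d ≫ (shiftFunctor T (1:ℤ)).map f = 0 := comp_distTriang_mor_zero₃₁ _ hAR.1
  have hd : d ≫ (shiftFunctor T (1:ℤ)).map u₁ = 0 := by
    rw [← ht₁, Functor.map_comp, ← Category.assoc, h31, zero_comp]
  obtain ⟨t, ht⟩ := Triangle.coyoneda_exact₁ _ hT d hd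
  exact ⟨t, ht.symm⟩


/-- D-L1 : `d` factors through every nonzero map out of `Z`. -/
lemma DL1 {A Y Z : T} {f : A ⟶ Y} {g : Y ⟶ Z} {d : Z ⟶ A⟦(1:ℤ)⟧} (hAR : IsARTriangle f g d)
    {X : T} (φ : Z ⟶ X) (hφ : φ ≠ 0) : ∃ δ : X ⟶ A⟦(1:ℤ)⟧, φ ≫ δ = d := by
  obtain ⟨Q, p, r, hT⟩ := distinguished_cocone_triangle φ
  have hT' : (Triangle.mk φ p r).invRotate ∈ distTriang T := inv_rot_of_distTriang _ hT
  have hσφ : (Triangle.mk φ p r).invRotate.mor₁ ≫ φ = 0 := comp_distTriang_mor_zero₁₂ _ hT'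
  have hnr : ¬ ∃ vv : Z ⟶ (Triangle.mk φ p r).invRotate.obj₁,
      vv ≫ (Triangle.mk φ p r).invRotate.mor₁ = 𝟙 Z := by
    rintro ⟨vv, hv⟩
    apply hφ
    calc φ = (𝟙 Z) ≫ φ := by simp
    _ = vv ≫ ((Triangle.mk φ p r).invRotate.mor₁ ≫ φ) := by rw [← hv]; exact Category.assoc _ _ _
    _ = 0 := by rw [hσφ, comp_zero]
  obtain ⟨m, hm⟩ := hAR.2.2.2 _ _ hnr
  have h23 : g ≫ d = 0 := comp_distTriang_mor_zero₂₃ _ hAR.1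
  have hzero : (Triangle.mk φ p r).invRotate.mor₁ ≫ d = 0 := by
    rw [← hm]
    exact (Category.assoc m g d).trans (by rw [h23, comp_zero])
  obtain ⟨δ, hδ⟩ := Triangle.yoneda_exact₂ _ hT' d hzero
  exact ⟨δ, hδ.symm⟩

/-- L2 : the connecting map of an AR triangle in `S` factors through every nonzero map
from an object of `S` into `A⟦1⟧`. -/
lemma L2 {S : Set T}
    (hext : ∀ {A B C : T} (f : A ⟶ B) (g : B ⟶ C) (h : C ⟶ A⟦(1 : ℤ)⟧),
      Triangle.mk f g h ∈ (distTriang T) → A ∈ S → C ∈ S → B ∈ S)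
    {A B C₀ : T} {u : A ⟶ B} {v : B ⟶ C₀} {w : C₀ ⟶ A⟦(1:ℤ)⟧}
    (hT2 : IsARTriangleIn S u v w)
    {X : T} (hX : X ∈ S) (δ : X ⟶ A⟦(1:ℤ)⟧) (hδ : δ ≠ 0) :
    ∃ τ : C₀ ⟶ X, τ ≫ δ = w := by
  obtain ⟨Bδ, uδ, vδ, hTδ⟩ := distinguished_cocone_triangle₂ δ
  have hBδ : Bδ ∈ S := hext uδ vδ δ hTδ hT2.1 hX
  have hnsec : ¬ ∃ r : Bδ ⟶ A, uδ ≫ r = 𝟙 A := by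
    rintro ⟨r, hr⟩; exact hδ (mor₃_eq_zero_of_section hTδ hr)
  obtain ⟨tδ, htδ⟩ := hT2.2.2.2.2.2.1 Bδ hBδ uδ hnsec
  have h31 : w ≫ (shiftFunctor T (1:ℤ)).map u = 0 := comp_distTriang_mor_zero₃₁ _ hT2.2.2.2.1
  have hw : w ≫ (shiftFunctor T (1:ℤ)).map uδ = 0 := by
    rw [← htδ, Functor.map_comp, ← Category.assoc, h31, zero_comp]
  obtain ⟨τ, hτ⟩ := Triangle.coyoneda_exact₁ _ hTδ w hw
  exact ⟨τ, hτ.symm⟩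


/-- In a Hom-finite category, a morphism with a left inverse from the same object is iso. -/
lemma isIso_of_leftInverse {D : T} [FiniteDimensional k (D ⟶ D)] {σ ρ : D ⟶ D}
    (h : ρ ≫ σ = 𝟙 D) : IsIso σ := by
  let χ : (D ⟶ D) →ₗ[k] (D ⟶ D) := Linear.rightComp k D σ
  have hsurj : Function.Surjective χ := by
    intro y
    refine ⟨y ≫ ρ, ?_⟩
    show (y ≫ ρ) ≫ σ = y
    rw [Category.assoc, h, Category.comp_id]
  have hinj : Function.Injective χ := by
    rwa [← LinearMap.injective_iff_surjective] at hsurj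
  have h2 : σ ≫ ρ = 𝟙 D := by
    apply hinj
    show (σ ≫ ρ) ≫ σ = (𝟙 D) ≫ σ
    rw [Category.assoc, h, Category.comp_id, Category.id_comp]
  exact ⟨ρ, h2, h⟩


/-- Wakamatsu-type lemma: compositions of an envelope with maps to `S`-shifts vanish. -/
lemma lemmaW {S : Set T}
    (hext : ∀ {A B C : T} (f : A ⟶ B) (g : B ⟶ C) (h : C ⟶ A⟦(1 : ℤ)⟧),
      Triangle.mk f g h ∈ (distTriang T) → A ∈ S → C ∈ S → B ∈ S)
    {Z CC : T} {ε : Z ⟶ CC} (hCC : CC ∈ S)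
    (hpre : ∀ C' : T, C' ∈ S → ∀ f : Z ⟶ C', ∃ g : CC ⟶ C', ε ≫ g = f)
    (hmin : ∀ g : CC ⟶ CC, ε ≫ g = ε → IsIso g)
    {A'' : T} (hA'' : A'' ∈ S)
    (β : CC ⟶ A''⟦(1:ℤ)⟧) (hβ : ε ≫ β = 0) : β = 0 := by
  obtain ⟨E, a, e, hTE⟩ := distinguished_cocone_triangle₂ β
  have hE : E ∈ S := hext a e β hTE hA'' hCC
  obtain ⟨ζ, hζ⟩ := Triangle.coyoneda_exact₃ _ hTE ε hβ
  have hζ' : ε = ζ ≫ e := hζ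
  obtain ⟨η, hη⟩ := hpre E hE ζ
  have hiso : IsIso (η ≫ e) := hmin _ (by rw [← Category.assoc, hη]; exact hζ'.symm)
  have he0 : e ≫ β = 0 := comp_distTriang_mor_zero₂₃ _ hTE
  calc β = inv (η ≫ e) ≫ (η ≫ e) ≫ β := by simp
  _ = inv (η ≫ e) ≫ η ≫ (e ≫ β) := by rw [Category.assoc]
  _ = 0 := by rw [he0, comp_zero, comp_zero]
open Polynomial in
lemma fitting {D V : T} [FiniteDimensional k (D ⟶ D)]
    (x : D ⟶ D) (hx : ¬ IsIso x) {w' : D ⟶ V} (hw : w' ≠ 0) (hxw : x ≫ w' = w') :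
    ∃ e : D ⟶ D, e ≫ e = e ∧ e ≫ w' = w' ∧ e ≠ 𝟙 D := by
  haveI : Module.Finite k (CategoryTheory.End D) := ‹FiniteDimensional k (D ⟶ D)›
  set x' : CategoryTheory.End D := x with hx'def
  have hxw' : x' ≫ w' = w' := hxw
  -- evaluation lemma
  have heval : ∀ r : k[X], (aeval x' r : CategoryTheory.End D) ≫ w' = (r.eval 1) • w' := by
    intro r
    induction r using Polynomial.induction_on with
    | C a =>
        have h1 : (aeval x' (C a) : CategoryTheory.End D) = a • (𝟙 D) := by
          rw [aeval_C, Algebra.algebraMap_eq_smul_one]; rfl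
        rw [h1, Linear.smul_comp, Category.id_comp, eval_C]
    | add p q hp hq =>
        have h1 : (aeval x' (p + q) : CategoryTheory.End D)
            = (aeval x' p : CategoryTheory.End D) + aeval x' q := by rw [map_add]
        rw [h1, Preadditive.add_comp, hp, hq, eval_add, add_smul]
    | monomial n a ih =>
        have heq : (C a * X ^ (n+1) : k[X]) = (C a * X ^ n) * X := by ring
        rw [heq, map_mul, aeval_X]
        have h2 : (aeval x' (C a * X ^ n) * x' : CategoryTheory.End D) ≫ w'
            = x' ≫ ((aeval x' (C a * X ^ n) : CategoryTheory.End D) ≫ w') := by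
          show (x' ≫ (aeval x' (C a * X ^ n) : CategoryTheory.End D)) ≫ w' = _
          rw [Category.assoc]
        rw [h2, ih, Linear.comp_smul, hxw']
        simp [eval_mul]
  have hint : IsIntegral k x' := Algebra.IsIntegral.isIntegral x'
  set p : k[X] := minpoly k x' * X with hpdef
  have hpne : p ≠ 0 := mul_ne_zero (minpoly.ne_zero hint) X_ne_zero
  have haevalp : (aeval x' p : CategoryTheory.End D) = 0 := by
    rw [hpdef, map_mul, minpoly.aeval, zero_mul]
  have hroot : 0 < p.rootMultiplicity 0 := by
    rw [rootMultiplicity_pos hpne]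
    show p.eval 0 = 0
    rw [hpdef, eval_mul, eval_X, mul_zero]
  obtain ⟨q, hq, hndvd⟩ := p.exists_eq_pow_rootMultiplicity_mul_and_not_dvd hpne 0
  rw [map_zero, sub_zero] at hq hndvd
  set m := p.rootMultiplicity 0 with hmdef
  obtain ⟨m', hm'⟩ : ∃ m', m = m' + 1 := ⟨m - 1, by omega⟩
  have hc0 : q.coeff 0 ≠ 0 := fun h => hndvd (X_dvd_iff.2 h)
  have hXq : IsCoprime (X : k[X]) q := by
    refine ⟨-(C (q.coeff 0)⁻¹) * divX q, C (q.coeff 0)⁻¹, ?_⟩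
    have hX : X * divX q + C (q.coeff 0) = q := X_mul_divX_add q
    have hCc : (C (q.coeff 0)⁻¹ : k[X]) * C (q.coeff 0) = 1 := by
      rw [← C_mul, inv_mul_cancel₀ hc0, C_1]
    linear_combination (-(C (q.coeff 0)⁻¹ : k[X])) * hX + hCc
  obtain ⟨s, t, hst⟩ := (hXq.pow_left : IsCoprime (X ^ m : k[X]) q)
  set e : CategoryTheory.End D := aeval x' (s * X ^ m) with hedef
  have haevalXmq : (aeval x' (X ^ m * q) : CategoryTheory.End D) = 0 := by
    rw [← hq]; exact haevalp
  -- idempotent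
  have hee : e * e = e := by
    have hpoly : (s * X ^ m) * (s * X ^ m) = (s * X ^ m) - (s * t) * (X ^ m * q) := by
      linear_combination (s * X ^ m) * hst
    have hz : (aeval x') (s * t * (X ^ m * q)) = (0 : CategoryTheory.End D) := by
      rw [map_mul, haevalXmq, mul_zero]
    rw [hedef, ← map_mul, hpoly, map_sub, hz, sub_zero]
  have heecomp : e ≫ e = e := hee
  -- scalars
  set lam : k := (t * q).eval 1 with hlamdef
  have hsum : (s * X ^ m).eval 1 + lam = 1 := by
    have h := congrArg (eval 1) hst
    rw [eval_add, eval_one] at h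
    exact h
  have h1me : ((1 : CategoryTheory.End D) - e) = aeval x' (t * q) := by
    have hmap := congrArg (aeval x' (R := k)) hst
    rw [map_add, map_one] at hmap
    rw [hedef, sub_eq_iff_eq_add]
    rw [add_comm]
    exact hmap.symm
  have h1mew : ((1 : CategoryTheory.End D) - e) ≫ w' = lam • w' := by
    rw [h1me]; exact heval (t * q)
  have hlam2 : lam * lam = lam := by
    have h1 : (((1 : CategoryTheory.End D) - e) ≫ ((1 : CategoryTheory.End D) - e)) ≫ w'
        = (lam * lam) • w' := by
      rw [Category.assoc, h1mew, Linear.comp_smul, h1mew, smul_smul]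
    have h2 : ((1 : CategoryTheory.End D) - e) ≫ ((1 : CategoryTheory.End D) - e)
        = ((1 : CategoryTheory.End D) - e) := by
      show ((1 : CategoryTheory.End D) - e) * ((1 : CategoryTheory.End D) - e) = _
      rw [sub_mul, one_mul, mul_sub, mul_one, hee]
      abel
    rw [h2, h1mew] at h1
    have h3 : (lam * lam - lam) • w' = 0 := by rw [sub_smul, h1, sub_self]
    rcases smul_eq_zero.1 h3 with h | h
    · exact sub_eq_zero.1 h
    · exact absurd h hw
  have hlam : lam = 0 ∨ lam = 1 := by
    rcases mul_eq_zero.1 (by linear_combination hlam2 : lam * (lam - 1) = 0) with h | h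
    · exact Or.inl h
    · exact Or.inr (sub_eq_zero.1 h)
  have hlam0 : lam = 0 := by
    rcases hlam with h | h
    · exact h
    · exfalso
      have hr₀ : ((X * (t * q)) ^ m : k[X]) = (X ^ m * q) * (t * (t * q) ^ m') := by
        rw [hm']; ring
      have haeval0 : (aeval x' ((X * (t * q)) ^ m) : CategoryTheory.End D) = 0 := by
        rw [hr₀, map_mul, haevalXmq, zero_mul]
      have heval1 : ((X * (t * q)) ^ m).eval 1 = 1 := by
        rw [eval_pow, eval_mul, eval_X, one_mul, ← hlamdef, h, one_pow]
      have h5 := heval ((X * (t * q)) ^ m)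
      rw [haeval0, heval1, one_smul] at h5
      have h6 : (0 : D ⟶ D) ≫ w' = w' := h5
      rw [Limits.zero_comp] at h6
      exact hw h6.symm
  have hew : e ≫ w' = w' := by
    have := heval (s * X ^ m)
    rw [hlam0, add_zero] at hsum
    rw [hedef] at *
    rw [this, hsum, one_smul]
  have hne : e ≠ 𝟙 D := by
    intro he1
    apply hx
    set y : CategoryTheory.End D := aeval x' (s * X ^ m') with hydef
    have hxy : x' * y = 1 := by
      have h1 : (aeval x') (X * (s * X ^ m')) = x' * y := by
        rw [map_mul, aeval_X, hydef]
      have h2 : (X * (s * X ^ m') : k[X]) = s * X ^ m := by rw [hm']; ring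
      rw [← h1, h2, ← hedef, he1]; rfl
    have hyx : y * x' = 1 := by
      have h1 : (aeval x') ((s * X ^ m') * X) = y * x' := by
        rw [map_mul, aeval_X, hydef]
      have h2 : ((s * X ^ m') * X : k[X]) = s * X ^ m := by rw [hm']; ring
      rw [← h1, h2, ← hedef, he1]; rfl
    exact ⟨y, hyx, hxy⟩
  exact ⟨e, heecomp, hew, hne⟩
lemma finrank_lt_of_split {D D₂ : T} [FiniteDimensional k (D ⟶ D)]
    [FiniteDimensional k (D₂ ⟶ D₂)]
    (i : D₂ ⟶ D) (r : D ⟶ D₂) (hir : i ≫ r = 𝟙 D₂) (hne : r ≫ i ≠ 𝟙 D) :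
    Module.finrank k (D₂ ⟶ D₂) < Module.finrank k (D ⟶ D) := by
  let Φ : (D₂ ⟶ D₂) →ₗ[k] (D ⟶ D) :=
    { toFun := fun y => r ≫ y ≫ i
      map_add' := by
        intro y₁ y₂
        show r ≫ (y₁ + y₂) ≫ i = r ≫ y₁ ≫ i + r ≫ y₂ ≫ i
        rw [Preadditive.add_comp, Preadditive.comp_add]
      map_smul' := by
        intro a y
        show r ≫ (a • y) ≫ i = a • (r ≫ y ≫ i)
        rw [Linear.smul_comp, Linear.comp_smul] }
  have hinj : Function.Injective Φ := by
    intro y₁ y₂ h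
    have h2 := congrArg (fun z => i ≫ z ≫ r) h
    simp only [Φ, LinearMap.coe_mk, AddHom.coe_mk] at h2
    calc y₁ = (i ≫ r) ≫ y₁ ≫ (i ≫ r) := by rw [hir]; simp
    _ = i ≫ (r ≫ y₁ ≫ i) ≫ r := by simp only [Category.assoc]
    _ = i ≫ (r ≫ y₂ ≫ i) ≫ r := by rw [h2]
    _ = (i ≫ r) ≫ y₂ ≫ (i ≫ r) := by simp only [Category.assoc]
    _ = y₂ := by rw [hir]; simp
  have hnottop : LinearMap.range Φ ≠ ⊤ := by
    intro htop
    have hmem : 𝟙 D ∈ LinearMap.range Φ := htop ▸ Submodule.mem_top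
    obtain ⟨y, hy⟩ := hmem
    apply hne
    have hy' : r ≫ y ≫ i = 𝟙 D := hy
    have h1 : i ≫ (𝟙 D - r ≫ i) = 0 := by
      rw [Preadditive.comp_sub, Category.comp_id, ← Category.assoc, hir, Category.id_comp,
        sub_self]
    have h2 : 𝟙 D - r ≫ i = (r ≫ y ≫ i) ≫ (𝟙 D - r ≫ i) := by
      rw [hy', Category.id_comp]
    rw [Category.assoc, Category.assoc, h1, comp_zero, comp_zero] at h2
    exact (sub_eq_zero.1 h2).symm
  calc Module.finrank k (D₂ ⟶ D₂) = Module.finrank k (LinearMap.range Φ) :=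
        (LinearMap.finrank_range_of_inj hinj).symm
  _ < Module.finrank k (D ⟶ D) := Submodule.finrank_lt hnottop

/-- Descent to a "left minimal" retract carrying the connecting map. -/
lemma minimal_version [IsIdempotentComplete T]
    (hfd : ∀ X Y : T, FiniteDimensional k (X ⟶ Y))
    {S : Set T}
    (hsum : ∀ {A A₁ : T} (i : A₁ ⟶ A) (p : A ⟶ A₁), i ≫ p = 𝟙 A₁ → A ∈ S → A₁ ∈ S)
    {Z CC A : T} (ε : Z ⟶ CC) (d : Z ⟶ A⟦(1:ℤ)⟧) (hd : d ≠ 0) :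
    ∀ (n : ℕ) (D : T), D ∈ S → ∀ (π : CC ⟶ D) (ι : D ⟶ CC), ι ≫ π = 𝟙 D →
      ∀ (w' : D ⟶ A⟦(1:ℤ)⟧), ε ≫ (π ≫ w') = d → Module.finrank k (D ⟶ D) ≤ n →
      ∃ (D' : T) (π' : CC ⟶ D') (ι' : D' ⟶ CC) (w'' : D' ⟶ A⟦(1:ℤ)⟧),
        D' ∈ S ∧ ι' ≫ π' = 𝟙 D' ∧ ε ≫ (π' ≫ w'') = d ∧
        (∀ a : D' ⟶ D', a ≫ w'' = w'' → IsIso a) := by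
  intro n
  induction n with
  | zero =>
    intro D hD π ι hιπ w' hεw hn
    exfalso
    haveI := hfd D D
    have hsub : Subsingleton (D ⟶ D) := by
      rw [← Module.finrank_zero_iff (R := k)]
      omega
    have h1 : (𝟙 D : D ⟶ D) = 0 := Subsingleton.elim _ _
    apply hd
    rw [← hεw]
    have : π ≫ w' = π ≫ (𝟙 D ≫ w') := by rw [Category.id_comp]
    rw [this, h1, zero_comp, comp_zero, comp_zero]
  | succ n ih =>
    intro D hD π ι hιπ w' hεw hn
    by_cases hmin : ∀ a : D ⟶ D, a ≫ w' = w' → IsIso a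
    · exact ⟨D, π, ι, w', hD, hιπ, hεw, hmin⟩
    · push_neg at hmin
      obtain ⟨a, haw, hai⟩ := hmin
      haveI := hfd D D
      have hw' : w' ≠ 0 := by
        intro h0
        apply hd
        rw [← hεw, h0, comp_zero, comp_zero]
      obtain ⟨e, hee, hew, hne⟩ := fitting (k := k) a hai hw' haw
      obtain ⟨D₂, i, r, hir, hri⟩ := IsIdempotentComplete.idempotents_split D e hee
      haveI := hfd D₂ D₂
      have hD₂ : D₂ ∈ S := hsum i r hir hD
      have hdim : Module.finrank k (D₂ ⟶ D₂) < Module.finrank k (D ⟶ D) :=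
        finrank_lt_of_split i r hir (by rw [hri]; exact hne)
      refine ih D₂ hD₂ (π ≫ r) (i ≫ ι) ?_ (i ≫ w') ?_ (by omega)
      · rw [Category.assoc, ← Category.assoc ι π r, hιπ, Category.id_comp, hir]
      · have h2 : (π ≫ r) ≫ (i ≫ w') = π ≫ (e ≫ w') := by
          rw [← hri]
          simp only [Category.assoc]
        rw [h2, hew, hεw]

/-- Dual main theorem: if `A ∈ S` admits a non-zero morphism from an object of `S` to
`ΣA`, and `A ⟶ Y ⟶ Z ⟶ ΣA` is an Auslander-Reiten triangle in `T`, then `Z` has an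
`S`-envelope if and only if there is an Auslander-Reiten triangle `A ⟶ B ⟶ C ⟶ ΣA` in
the subcategory `S` starting at `A`. -/
theorem envelope_iff_AR_triangle_in_subcategory (S : Set T)
    [EssentiallySmall.{v} T] [IsIdempotentComplete T]
    (hfd : ∀ X Y : T, FiniteDimensional k (X ⟶ Y))
    (hiso : ∀ {X Y : T}, (X ≅ Y) → X ∈ S → Y ∈ S)
    (hext : ∀ {A B C : T} (f : A ⟶ B) (g : B ⟶ C) (h : C ⟶ A⟦(1 : ℤ)⟧),
      Triangle.mk f g h ∈ (distTriang T) → A ∈ S → C ∈ S → B ∈ S)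
    (hsum : ∀ {A A₁ : T} (i : A₁ ⟶ A) (p : A ⟶ A₁), i ≫ p = 𝟙 A₁ → A ∈ S → A₁ ∈ S)
    {A C' : T} (hA : A ∈ S) (hC' : C' ∈ S)
    (c : C' ⟶ A⟦(1 : ℤ)⟧) (hc : c ≠ 0)
    {Y Z : T} (f : A ⟶ Y) (g : Y ⟶ Z) (d : Z ⟶ A⟦(1 : ℤ)⟧)
    (hAR : IsARTriangle f g d) :
    (∃ (C : T) (ε : Z ⟶ C), IsEnvelope S ε) ↔
    (∃ (B C : T) (u : A ⟶ B) (v : B ⟶ C) (w : C ⟶ A⟦(1 : ℤ)⟧),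
      IsARTriangleIn S u v w) := by
  have hd : d ≠ 0 := hAR.2.1
  have h31 : d ≫ (shiftFunctor T (1:ℤ)).map f = 0 := comp_distTriang_mor_zero₃₁ _ hAR.1
  constructor
  · rintro ⟨CC, ε, ⟨⟨hCC, hpre⟩, hmin⟩⟩
    -- Step 1: construct a map `CC ⟶ ΣA` compatible with `d`
    obtain ⟨t₀, ht₀⟩ := L1 hAR c hc
    obtain ⟨ψ₀, hψ₀⟩ := hpre C' hC' t₀
    have hεw₀ : ε ≫ ((𝟙 CC) ≫ (ψ₀ ≫ c)) = d := by
      rw [Category.id_comp, ← Category.assoc, hψ₀, ht₀]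
    -- Step 2: descend to a left-minimal retract
    haveI := hfd CC CC
    obtain ⟨D, π, ι, w', hD, hιπ, hεw', hminw⟩ :=
      minimal_version hfd hsum ε d hd (Module.finrank k (CC ⟶ CC)) CC hCC (𝟙 CC) (𝟙 CC)
        (Category.id_comp _) (ψ₀ ≫ c) hεw₀ le_rfl
    -- Step 3: the cone of `w'` gives the AR triangle in `S`
    obtain ⟨B₂, u₂, v₂, hT₂⟩ := distinguished_cocone_triangle₂ w'
    have hw' : w' ≠ 0 := by
      intro h0; apply hd; rw [← hεw', h0, comp_zero, comp_zero]
    refine ⟨B₂, D, u₂, v₂, w', hA, hext u₂ v₂ w' hT₂ hA hD, hD, hT₂, hw', ?_, ?_⟩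
    · -- left almost split in S
      intro A' hA' u' hnonsec
      obtain ⟨t', ht'⟩ := hAR.2.2.1 A' u' hnonsec
      have hdu' : d ≫ (shiftFunctor T (1:ℤ)).map u' = 0 := by
        rw [← ht', Functor.map_comp, ← Category.assoc, h31, zero_comp]
      have hβ : ε ≫ (π ≫ (w' ≫ (shiftFunctor T (1:ℤ)).map u')) = 0 := by
        have hassoc : ε ≫ (π ≫ (w' ≫ (shiftFunctor T (1:ℤ)).map u'))
            = (ε ≫ (π ≫ w')) ≫ (shiftFunctor T (1:ℤ)).map u' := by
          simp only [Category.assoc]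
        rw [hassoc, hεw', hdu']
      have hzero : π ≫ (w' ≫ (shiftFunctor T (1:ℤ)).map u') = 0 :=
        lemmaW hext hCC hpre hmin hA' _ hβ
      have hw'u' : w' ≫ (shiftFunctor T (1:ℤ)).map u' = 0 := by
        have h5 : ι ≫ (π ≫ (w' ≫ (shiftFunctor T (1:ℤ)).map u')) = 0 := by
          rw [hzero, comp_zero]
        rwa [← Category.assoc, hιπ, Category.id_comp] at h5
      have hrot2 : (Triangle.mk u₂ v₂ w').rotate.rotate ∈ distTriang T :=
        rot_of_distTriang _ (rot_of_distTriang _ hT₂)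
      have hmor : (Triangle.mk u₂ v₂ w').rotate.rotate.mor₁
          ≫ (shiftFunctor T (1:ℤ)).map u' = 0 := hw'u'
      obtain ⟨g₂, hg₂⟩ : ∃ g₂ : B₂⟦(1:ℤ)⟧ ⟶ A'⟦(1:ℤ)⟧, (shiftFunctor T (1:ℤ)).map u'
          = (-(shiftFunctor T (1:ℤ)).map u₂) ≫ g₂ :=
        Triangle.yoneda_exact₂ _ hrot2 ((shiftFunctor T (1:ℤ)).map u') hmor
      have hg₂' : (shiftFunctor T (1:ℤ)).map u'
          = (-(shiftFunctor T (1:ℤ)).map u₂) ≫ g₂ := hg₂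
      obtain ⟨wit, hwit⟩ : ∃ wit : B₂ ⟶ A', (shiftFunctor T (1:ℤ)).map wit = g₂ :=
        (shiftFunctor T (1:ℤ)).map_surjective g₂
      refine ⟨-wit, ?_⟩
      apply (shiftFunctor T (1:ℤ)).map_injective
      rw [Functor.map_comp, Functor.map_neg, hwit, hg₂']
      simp
    · -- right almost split in S
      intro C'' hC'' u'' hnonret
      by_cases hz : u'' ≫ w' = 0
      · obtain ⟨wit, hwit⟩ := Triangle.coyoneda_exact₃ _ hT₂ u'' hz
        exact ⟨wit, hwit.symm⟩
      · exfalso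
        apply hnonret
        obtain ⟨t'', ht''⟩ := L1 hAR (u'' ≫ w') hz
        obtain ⟨σ, hσ⟩ := hpre C'' hC'' t''
        have hβ : ε ≫ (σ ≫ (u'' ≫ w') - π ≫ w') = 0 := by
          rw [Preadditive.comp_sub]
          have h1 : ε ≫ (σ ≫ (u'' ≫ w')) = d := by rw [← Category.assoc, hσ, ht'']
          rw [h1, hεw', sub_self]
        have heq : σ ≫ (u'' ≫ w') - π ≫ w' = 0 := lemmaW hext hCC hpre hmin hA _ hβ
        have h2 : σ ≫ (u'' ≫ w') = π ≫ w' := by rwa [sub_eq_zero] at heq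
        have heq' : (ι ≫ σ ≫ u'') ≫ w' = w' := by
          calc (ι ≫ σ ≫ u'') ≫ w' = ι ≫ (σ ≫ (u'' ≫ w')) := by simp only [Category.assoc]
          _ = ι ≫ (π ≫ w') := by rw [h2]
          _ = w' := by rw [← Category.assoc, hιπ, Category.id_comp]
        haveI := hminw _ heq'
        refine ⟨inv (ι ≫ σ ≫ u'') ≫ (ι ≫ σ), ?_⟩
        simp only [Category.assoc]
        exact IsIso.inv_hom_id _
  · rintro ⟨B, C₀, u, v, w, hT2⟩
    obtain ⟨hA2, hB, hC₀, hdist, hw, hii, hiii⟩ := hT2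
    have hu : ¬ ∃ rr : B ⟶ A, u ≫ rr = 𝟙 A := by
      rintro ⟨rr, hrr⟩; exact hw (mor₃_eq_zero_of_section hdist hrr)
    obtain ⟨t, ht⟩ := hAR.2.2.1 B u hu
    have hdu : d ≫ (shiftFunctor T (1:ℤ)).map u = 0 := by
      rw [← ht, Functor.map_comp, ← Category.assoc, h31, zero_comp]
    obtain ⟨ε, hε⟩ : ∃ ε : Z ⟶ C₀, d = ε ≫ w := Triangle.coyoneda_exact₁ _ hdist d hdu
    have hε' : d = ε ≫ w := hε
    refine ⟨C₀, ε, ⟨⟨hC₀, ?_⟩, ?_⟩⟩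
    · -- preenvelope, via the non-degenerate pairings
      intro X hX φ
      haveI := hfd Z X
      haveI := hfd X (A⟦(1:ℤ)⟧)
      haveI := hfd C₀ X
      obtain ⟨ℓ, hℓ⟩ := exists_functional (k := k) (M := (Z ⟶ A⟦(1:ℤ)⟧)) d hd
      let Bb : (Z ⟶ X) →ₗ[k] (X ⟶ A⟦(1:ℤ)⟧) →ₗ[k] k :=
        LinearMap.mk₂ k (fun φ' δ => ℓ (φ' ≫ δ))
          (fun φ₁ φ₂ δ => by simp [Preadditive.add_comp])
          (fun a φ' δ => by simp [Linear.smul_comp])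
          (fun φ' δ₁ δ₂ => by simp [Preadditive.comp_add])
          (fun a φ' δ => by simp [Linear.comp_smul])
      let m : (C₀ ⟶ X) →ₗ[k] (Z ⟶ X) := Linear.leftComp k X ε
      have h₁ : ∀ φ' : Z ⟶ X, φ' ≠ 0 → ∃ δ, Bb φ' δ ≠ 0 := by
        intro φ' hφ'
        obtain ⟨δ, hδ⟩ := DL1 hAR φ' hφ'
        refine ⟨δ, ?_⟩
        show ℓ (φ' ≫ δ) ≠ 0
        rw [hδ, hℓ]
        exact one_ne_zero
      have h₂ : ∀ δ : X ⟶ A⟦(1:ℤ)⟧, δ ≠ 0 → ∃ ψ, Bb (m ψ) δ ≠ 0 := by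
        intro δ hδ
        obtain ⟨τ, hτ⟩ := L2 hext ⟨hA2, hB, hC₀, hdist, hw, hii, hiii⟩ hX δ hδ
        refine ⟨τ, ?_⟩
        show ℓ ((ε ≫ τ) ≫ δ) ≠ 0
        rw [Category.assoc, hτ, ← hε', hℓ]
        exact one_ne_zero
      obtain ⟨ψ, hψ⟩ := pairing_surjective Bb m h₁ h₂ φ
      exact ⟨ψ, hψ⟩
    · -- left minimal
      intro a ha
      haveI := hfd C₀ C₀
      have haw : a ≫ w ≠ 0 := by
        intro h0
        apply hd
        rw [hε', ← ha, Category.assoc, h0, comp_zero]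
      have hret : ∃ ρ : C₀ ⟶ C₀, ρ ≫ a = 𝟙 C₀ := by
        by_contra hno
        obtain ⟨wit, hwit⟩ := hiii C₀ hC₀ a hno
        apply haw
        have h23 : v ≫ w = 0 := comp_distTriang_mor_zero₂₃ _ hdist
        rw [← hwit, Category.assoc, h23, comp_zero]
      obtain ⟨ρ, hρ⟩ := hret
      exact isIso_of_leftInverse (k := k) hρ
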